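/- Let p, q be positive integers with p < q, q odd, and suppose 2 is the least positive integer m with p | q + m. Let (a_n) be the greedy Egyptian fraction expansion of p/q. Then a_1 = (q+2)/p, a_2 = ⌊q·a_1/2⌋ + 1, and for every n ≥ 3, p/q − Σ_{i=1}^{n−1} 1/a_i = 1/(q·Π_{i=1}^{n−1} a_i); consequently a_n = q·Π_{i=1}^{n−1} a_i + 1 for n ≥ 3. -/

import Mathlib

theorem stmt_15 (p q : ℕ) (hp : 0 < p) (hpq : p < q) (hqodd : Odd q)
    (h1 : ¬ p ∣ q + 1) (h2 : p ∣ q + 2)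
    (a : ℕ → ℤ)
    (ha1 : a 1 = ⌊1/((p:ℝ)/q)⌋ + 1)
    (harec : ∀ j, 2 ≤ j →
      a j = ⌊1/((p:ℝ)/q - ∑ n ∈ Finset.Ico 1 j, (1:ℝ)/(a n))⌋ + 1) :
    (p : ℤ) * a 1 = q + 2 ∧
    a 2 = ⌊((q : ℝ) * (a 1 : ℝ)) / 2⌋ + 1 ∧
    ∀ n, 3 ≤ n →
      ((p:ℝ)/q - ∑ i ∈ Finset.Ico 1 n, (1:ℝ)/(a i)
        = 1 / ((q:ℝ) * ∏ i ∈ Finset.Ico 1 n, (a i : ℝ))) ∧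
      a n = (q : ℤ) * ∏ i ∈ Finset.Ico 1 n, a i + 1 := by
  obtain ⟨k, hk⟩ := h2
  have hq0 : (0:ℝ) < q := by exact_mod_cast hp.trans hpq
  have hp0 : (0:ℝ) < p := by exact_mod_cast hp
  have hp2 : 2 ≤ p := by
    rcases Nat.lt_or_ge p 2 with h | h
    · interval_cases p
      · exact absurd (one_dvd _) h1
    · exact h
  have hpodd : Odd p := by
    rcases Nat.even_or_odd p with he | ho
    · exfalso
      rw [Nat.even_iff] at he
      rw [Nat.odd_iff] at hqodd
      have hmm := Nat.mul_mod p k 2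
      simp [he] at hmm
      omega
    · exact ho
  have hk2 : 2 ≤ k := by nlinarith [hk]
  have hkodd : Odd k := by
    rcases Nat.even_or_odd k with he | ho
    · exfalso
      rw [Nat.even_iff] at he
      have hq2 := hqodd
      rw [Nat.odd_iff] at hq2
      have hmm := Nat.mul_mod p k 2
      simp [he] at hmm
      omega
    · exact ho
  have hkR : (p:ℝ) * k = q + 2 := by exact_mod_cast hk.symm
  have hp2R : (2:ℝ) ≤ p := by exact_mod_cast hp2
  -- a 1 = k
  have ha1k : a 1 = (k:ℤ) := by
    rw [ha1, one_div_div]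
    have hfl : ⌊(q:ℝ)/p⌋ = (k:ℤ) - 1 := by
      rw [Int.floor_eq_iff]
      constructor
      · rw [le_div_iff₀ hp0]
        push_cast
        nlinarith [hp2R]
      · rw [div_lt_iff₀ hp0]
        push_cast
        nlinarith
    rw [hfl]; ring
  have ha1pos : (0:ℝ) < (a 1 : ℝ) := by
    rw [ha1k]; exact_mod_cast by omega
  refine ⟨by rw [ha1k]; exact_mod_cast hk.symm, ?_⟩
  -- remainder after first term
  have hrem2 : (p:ℝ)/q - ∑ n ∈ Finset.Ico 1 2, (1:ℝ)/(a n) = 2 / ((q:ℝ) * k) := by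
    have : (Finset.Ico 1 2) = {1} := rfl
    rw [this, Finset.sum_singleton, ha1k]
    have hkR0 : (0:ℝ) < (k:ℝ) := by exact_mod_cast by omega
    field_simp
    push_cast
    nlinarith
  obtain ⟨m, hm⟩ := hqodd.mul hkodd
  have hmR : (q:ℝ) * k = 2 * m + 1 := by exact_mod_cast hm
  have ha2 : a 2 = (m:ℤ) + 1 := by
    rw [harec 2 le_rfl, hrem2, hmR]
    have : (1:ℝ) / (2 / (2 * m + 1)) = (2*m+1)/2 := by
      rw [one_div_div]
    rw [this]
    have hfl : ⌊((2:ℝ) * m + 1)/2⌋ = (m:ℤ) := by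
      rw [Int.floor_eq_iff]
      constructor
      · rw [le_div_iff₀ (by norm_num : (0:ℝ) < 2)]; push_cast; linarith
      · rw [div_lt_iff₀ (by norm_num : (0:ℝ) < 2)]; push_cast; linarith
    rw [hfl]
  constructor
  · -- a 2 = ⌊q * a1 / 2⌋ + 1
    rw [ha2, ha1k]
    have : (q:ℝ) * ((k:ℤ) : ℝ) = 2 * m + 1 := by push_cast; exact_mod_cast hm
    rw [this]
    have hfl : ⌊((2:ℝ) * m + 1)/2⌋ = (m:ℤ) := by
      rw [Int.floor_eq_iff]
      constructor
      · rw [le_div_iff₀ (by norm_num : (0:ℝ) < 2)]; push_cast; linarith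
      · rw [div_lt_iff₀ (by norm_num : (0:ℝ) < 2)]; push_cast; linarith
    rw [hfl]
  -- invariant
  have key : ∀ n, 3 ≤ n →
      ((p:ℝ)/q - ∑ i ∈ Finset.Ico 1 n, (1:ℝ)/(a i)
        = 1 / ((q:ℝ) * ∏ i ∈ Finset.Ico 1 n, (a i : ℝ)))
      ∧ (0 : ℤ) < ∏ i ∈ Finset.Ico 1 n, a i := by
    intro n hn
    induction n, hn using Nat.le_induction with
    | base =>
      have hs : (Finset.Ico 1 3) = {1, 2} := rfl
      have hsum3 : ∑ i ∈ Finset.Ico 1 3, (1:ℝ)/(a i)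
          = (∑ i ∈ Finset.Ico 1 2, (1:ℝ)/(a i)) + 1/(a 2) :=
        Finset.sum_Ico_succ_top (by norm_num) _
      have hprod3 : ∏ i ∈ Finset.Ico 1 3, a i = a 1 * a 2 := by
        simp [hs, Finset.prod_pair (by decide : (1:ℕ) ≠ 2)]
      have hprod3R : ∏ i ∈ Finset.Ico 1 3, ((a i):ℝ) = ((a 1 : ℤ) : ℝ) * ((a 2 : ℤ) : ℝ) := by
        simp [hs, Finset.prod_pair (by decide : (1:ℕ) ≠ 2)]
      have hkR0 : (0:ℝ) < (k:ℝ) := by exact_mod_cast (by omega : 0 < k)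
      have hmR1 : (0:ℝ) < (m:ℝ) + 1 := by positivity
      constructor
      · rw [hsum3, sub_add_eq_sub_sub, hrem2, hprod3R, ha1k, ha2]
        push_cast
        rw [div_sub_div _ _ (by positivity) (by positivity),
          div_eq_div_iff (by positivity) (by positivity)]
        linear_combination (-((q:ℝ)*k*((m:ℝ)+1))) * hmR
      · rw [hprod3, ha1k, ha2]
        have hkZ : (0:ℤ) < (k:ℤ) := by exact_mod_cast (by omega : 0 < k)
        positivity
    | succ n hn ih =>
      obtain ⟨ihrem, ihpos⟩ := ih
      set P : ℤ := ∏ i ∈ Finset.Ico 1 n, a i with hP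
      have hPR : (0:ℝ) < ((q:ℝ) * (P:ℝ)) := by
        have : (0:ℝ) < (P:ℝ) := by exact_mod_cast ihpos
        positivity
      have hprodcast : ((P:ℤ):ℝ) = ∏ i ∈ Finset.Ico 1 n, ((a i : ℤ) : ℝ) := by
        push_cast [hP]; rfl
      have han : a n = (q:ℤ) * P + 1 := by
        rw [harec n (by omega), ihrem]
        rw [one_div_one_div]
        have : ((q:ℝ) * ∏ i ∈ Finset.Ico 1 n, ((a i : ℤ):ℝ)) = (((q:ℤ) * P : ℤ) : ℝ) := by
          push_cast [hP]; ring
        rw [this, Int.floor_intCast]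
      have hanpos : (0:ℤ) < a n := by
        have : (0:ℤ) ≤ (q:ℤ) * P := mul_nonneg (by positivity) ihpos.le
        omega
      have h1n : 1 ≤ n := by omega
      have hsum : ∑ i ∈ Finset.Ico 1 (n+1), (1:ℝ)/(a i)
          = (∑ i ∈ Finset.Ico 1 n, (1:ℝ)/(a i)) + 1/(a n) :=
        Finset.sum_Ico_succ_top h1n _
      have hprod : (∏ i ∈ Finset.Ico 1 (n+1), ((a i):ℝ))
          = (∏ i ∈ Finset.Ico 1 n, ((a i):ℝ)) * (a n : ℝ) :=
        Finset.prod_Ico_succ_top h1n _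
      constructor
      · rw [hsum, hprod]
        have : (p:ℝ)/q - ((∑ i ∈ Finset.Ico 1 n, (1:ℝ)/(a i)) + 1/(a n))
            = (1 / ((q:ℝ) * ∏ i ∈ Finset.Ico 1 n, (a i : ℝ))) - 1/(a n) := by
          rw [← ihrem]; ring
        rw [this]
        have hanR : (a n : ℝ) = (q:ℝ) * (P:ℝ) + 1 := by
          rw [han]; push_cast; ring
        rw [← hprodcast, hanR]
        rw [div_sub_div _ _ (by positivity) (by positivity),
          div_eq_div_iff (by positivity) (by positivity)]
        ring
      · rw [Finset.prod_Ico_succ_top h1n]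
        exact mul_pos ihpos hanpos
  intro n hn
  obtain ⟨hrem, hpos⟩ := key n hn
  refine ⟨hrem, ?_⟩
  rw [harec n (by omega), hrem, one_div_one_div]
  have : ((q:ℝ) * ∏ i ∈ Finset.Ico 1 n, ((a i : ℤ):ℝ)) = (((q:ℤ) * ∏ i ∈ Finset.Ico 1 n, a i : ℤ) : ℝ) := by
    push_cast; ring
  rw [this, Int.floor_intCast]
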